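/- The Ricci curvature of a left invariant metric on a 3-dimensional unimodular Lie group is diagonal in any Milnor basis that is orthogonal for the metric: Ric(u,v) = Ric(v,w) = Ric(w,u) = 0. In particular, each Milnor flat is invariant under the Ricci map. -/
import Mathlib


noncomputable section

/-- The Milnor bracket `[u,v] = a•w`, `[v,w] = b•u`, `[w,u] = c•v` on `ℝ³`. -/
def milnorBracket (a b c : ℝ) (x y : Fin 3 → ℝ) : Fin 3 → ℝ :=
  ![b * (x 1 * y 2 - x 2 * y 1), c * (x 2 * y 0 - x 0 * y 2), a * (x 0 * y 1 - x 1 * y 0)]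

/-- The inner product making `u, v, w` orthogonal with `⟨u,u⟩ = x`, `⟨v,v⟩ = y`, `⟨w,w⟩ = z`. -/
def gMet (x y z : ℝ) (p q : Fin 3 → ℝ) : ℝ :=
  x * p 0 * q 0 + y * p 1 * q 1 + z * p 2 * q 2

/-- The orthonormal basis `u/√x, v/√y, w/√z`. -/
def onb (x y z : ℝ) : Fin 3 → (Fin 3 → ℝ) :=
  ![(Real.sqrt x)⁻¹ • (Pi.single 0 1 : Fin 3 → ℝ),
    (Real.sqrt y)⁻¹ • (Pi.single 1 1 : Fin 3 → ℝ),
    (Real.sqrt z)⁻¹ • (Pi.single 2 1 : Fin 3 → ℝ)]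

/-- The Killing form `B(X,Y) = tr(ad_X ∘ ad_Y)`. -/
def killingF (a b c : ℝ) (X Y : Fin 3 → ℝ) : ℝ :=
  ∑ i : Fin 3, milnorBracket a b c X (milnorBracket a b c Y (Pi.single i 1)) i

/-- The Ricci curvature as a bilinear form,
`Ric(X,Y) = −½B(X,Y) − ½Σᵢ⟨[X,eᵢ],[Y,eᵢ]⟩ + ¼Σᵢⱼ⟨[eᵢ,eⱼ],X⟩⟨[eᵢ,eⱼ],Y⟩`. -/
def ricB (a b c x y z : ℝ) (X Y : Fin 3 → ℝ) : ℝ :=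
  -(1/2) * killingF a b c X Y
    - (1/2) * ∑ i : Fin 3,
        gMet x y z (milnorBracket a b c X (onb x y z i)) (milnorBracket a b c Y (onb x y z i))
    + (1/4) * ∑ i : Fin 3, ∑ j : Fin 3,
        (gMet x y z (milnorBracket a b c (onb x y z i) (onb x y z j)) X)
          * (gMet x y z (milnorBracket a b c (onb x y z i) (onb x y z j)) Y)

/-- The Ricci curvature of a left invariant metric on a 3-dimensional unimodular Lie group is
diagonal in any Milnor basis orthogonal for the metric:
`Ric(u,v) = Ric(v,w) = Ric(w,u) = 0` (so each Milnor flat is invariant under the Ricci map). -/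
theorem ric_diagonal_in_milnor_basis (a b c x y z : ℝ)
    (hx : 0 < x) (hy : 0 < y) (hz : 0 < z) :
    ricB a b c x y z (Pi.single 0 1) (Pi.single 1 1) = 0 ∧
    ricB a b c x y z (Pi.single 1 1) (Pi.single 2 1) = 0 ∧
    ricB a b c x y z (Pi.single 2 1) (Pi.single 0 1) = 0 := by
  refine ⟨?_, ?_, ?_⟩ <;>
  · simp [ricB, killingF, gMet, milnorBracket, onb, Fin.sum_univ_three, Pi.single_apply,
      Pi.smul_apply, smul_eq_mul, Matrix.vecHead, Matrix.vecTail]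

end
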